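/- Let A be a Noetherian ring, R = A[[x₁,...,xₙ]], M a finite R-module and N a finite A-module. Then the canonical map M ⊗_A N → (M ⊗_A N)^∧, where ^∧ denotes ⟨x⟩-adic completion, is injective. -/

import Mathlib

open TensorProduct



noncomputable section
namespace HBaux

open MvPowerSeries Finset

/-- The index equivalence. -/
def dd (σ τ : Type*) : ((σ ⊕ τ) →₀ ℕ) ≃+ ((σ →₀ ℕ) × (τ →₀ ℕ)) :=
  Finsupp.sumFinsuppAddEquivProdFinsupp

lemma mul_apply {σ : Type*} [DecidableEq σ] {A : Type*} [CommRing A]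
    (f g : MvPowerSeries σ A) (m : σ →₀ ℕ) :
    (f * g) m = ∑ x ∈ antidiagonal m, f x.1 * g x.2 :=
  MvPowerSeries.coeff_mul (R := A) m f g

variable {A : Type*} [CommRing A] {σ τ : Type*}

def toMv (f : MvPowerSeries (σ ⊕ τ) A) : MvPowerSeries σ (MvPowerSeries τ A) :=
  fun p q => f ((dd σ τ).symm (p, q))

lemma toMv_mul (f g : MvPowerSeries (σ ⊕ τ) A) : toMv (f * g) = toMv f * toMv g := by
  classical
  funext p q
  show (f * g) ((dd σ τ).symm (p, q)) = (toMv f * toMv g) p q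
  rw [mul_apply f g, mul_apply (toMv f) (toMv g) p]
  erw [Finset.sum_apply q (antidiagonal p) _]
  calc ∑ x ∈ antidiagonal ((dd σ τ).symm (p, q)), f x.1 * g x.2
      = ∑ y ∈ antidiagonal p ×ˢ antidiagonal q,
          f ((dd σ τ).symm (y.1.1, y.2.1)) * g ((dd σ τ).symm (y.1.2, y.2.2)) := ?_
    _ = ∑ y ∈ antidiagonal p, ∑ z ∈ antidiagonal q,
          f ((dd σ τ).symm (y.1, z.1)) * g ((dd σ τ).symm (y.2, z.2)) := by
        rw [Finset.sum_product]
    _ = _ := by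
        refine Finset.sum_congr rfl fun y _ => ?_
        rw [mul_apply (toMv f y.1) (toMv g y.2) q]
        rfl
  refine Finset.sum_nbij'
    (i := fun x => ((((dd σ τ) x.1).1, ((dd σ τ) x.2).1), (((dd σ τ) x.1).2, ((dd σ τ) x.2).2)))
    (j := fun y => ((dd σ τ).symm (y.1.1, y.2.1), (dd σ τ).symm (y.1.2, y.2.2)))
    ?_ ?_ ?_ ?_ ?_
  · rintro ⟨x1, x2⟩ hx
    rw [Finset.HasAntidiagonal.mem_antidiagonal] at hx
    have h2 : (dd σ τ) x1 + (dd σ τ) x2 = (p, q) := by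
      rw [← map_add, hx]; simp
    rw [Finset.mem_product, Finset.HasAntidiagonal.mem_antidiagonal, Finset.HasAntidiagonal.mem_antidiagonal]
    exact ⟨congrArg Prod.fst h2, congrArg Prod.snd h2⟩
  · rintro ⟨⟨y1, y2⟩, ⟨z1, z2⟩⟩ hy
    rw [Finset.mem_product, Finset.HasAntidiagonal.mem_antidiagonal, Finset.HasAntidiagonal.mem_antidiagonal] at hy
    rw [Finset.HasAntidiagonal.mem_antidiagonal, ← map_add]
    show (dd σ τ).symm (y1 + y2, z1 + z2) = _
    rw [hy.1, hy.2]
  · rintro ⟨x1, x2⟩ _; simp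
  · rintro ⟨⟨y1, y2⟩, ⟨z1, z2⟩⟩ _; simp
  · rintro ⟨x1, x2⟩ _; simp

def sumRingEquiv (σ τ : Type*) (A : Type*) [CommRing A] :
    MvPowerSeries (σ ⊕ τ) A ≃+* MvPowerSeries σ (MvPowerSeries τ A) where
  toFun := toMv
  invFun g := fun m => g ((dd σ τ) m).1 ((dd σ τ) m).2
  left_inv f := by funext m; simp [toMv]
  right_inv g := by funext p q; simp [toMv]
  map_add' f g := rfl
  map_mul' := toMv_mul

end HBaux

noncomputable section
namespace HBaux2

open MvPowerSeries Finset

lemma mul_apply {σ : Type*} [DecidableEq σ] {A : Type*} [CommRing A]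
    (f g : MvPowerSeries σ A) (m : σ →₀ ℕ) :
    (f * g) m = ∑ x ∈ antidiagonal m, f x.1 * g x.2 :=
  MvPowerSeries.coeff_mul (R := A) m f g

variable {A : Type*} [CommRing A] {σ τ : Type*}

def toRen (e : σ ≃ τ) (f : MvPowerSeries σ A) : MvPowerSeries τ A :=
  fun m => f ((Finsupp.domCongr (M := ℕ) e).symm m)

lemma toRen_mul (e : σ ≃ τ) (f g : MvPowerSeries σ A) :
    toRen e (f * g) = toRen e f * toRen e g := by
  classical
  funext m
  show (f * g) ((Finsupp.domCongr (M := ℕ) e).symm m) = _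
  rw [mul_apply f g, mul_apply (toRen e f) (toRen e g) m]
  refine Finset.sum_nbij'
    (i := fun x => ((Finsupp.domCongr (M := ℕ) e) x.1, (Finsupp.domCongr (M := ℕ) e) x.2))
    (j := fun y => ((Finsupp.domCongr (M := ℕ) e).symm y.1, (Finsupp.domCongr (M := ℕ) e).symm y.2))
    ?_ ?_ ?_ ?_ ?_
  · rintro ⟨x1, x2⟩ hx
    rw [Finset.HasAntidiagonal.mem_antidiagonal] at hx
    rw [Finset.HasAntidiagonal.mem_antidiagonal, ← map_add, hx]
    exact (Finsupp.domCongr (M := ℕ) e).apply_symm_apply m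
  · rintro ⟨y1, y2⟩ hy
    rw [Finset.HasAntidiagonal.mem_antidiagonal] at hy
    rw [Finset.HasAntidiagonal.mem_antidiagonal, ← map_add, hy]
  · rintro ⟨x1, x2⟩ _
    exact Prod.ext ((Finsupp.domCongr (M := ℕ) e).symm_apply_apply x1)
      ((Finsupp.domCongr (M := ℕ) e).symm_apply_apply x2)
  · rintro ⟨y1, y2⟩ _
    exact Prod.ext ((Finsupp.domCongr (M := ℕ) e).apply_symm_apply y1)
      ((Finsupp.domCongr (M := ℕ) e).apply_symm_apply y2)
  · rintro ⟨x1, x2⟩ _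
    show f x1 * g x2
        = f ((Finsupp.domCongr (M := ℕ) e).symm ((Finsupp.domCongr (M := ℕ) e) x1))
        * g ((Finsupp.domCongr (M := ℕ) e).symm ((Finsupp.domCongr (M := ℕ) e) x2))
    rw [(Finsupp.domCongr (M := ℕ) e).symm_apply_apply x1,
      (Finsupp.domCongr (M := ℕ) e).symm_apply_apply x2]

def renameRingEquiv (e : σ ≃ τ) (A : Type*) [CommRing A] :
    MvPowerSeries σ A ≃+* MvPowerSeries τ A where
  toFun := toRen e
  invFun g := fun m => g ((Finsupp.domCongr (M := ℕ) e) m)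
  left_inv f := by
    funext m
    show f ((Finsupp.domCongr (M := ℕ) e).symm ((Finsupp.domCongr (M := ℕ) e) m)) = f m
    rw [(Finsupp.domCongr (M := ℕ) e).symm_apply_apply m]
  right_inv g := by
    funext m
    show g ((Finsupp.domCongr (M := ℕ) e) ((Finsupp.domCongr (M := ℕ) e).symm m)) = g m
    rw [(Finsupp.domCongr (M := ℕ) e).apply_symm_apply m]
  map_add' f g := rfl
  map_mul' := toRen_mul e

/-- Constant coefficient equiv for empty variable set. -/
def emptyRingEquiv (A : Type*) [CommRing A] : MvPowerSeries (Fin 0) A ≃+* A :=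
  RingEquiv.ofBijective (MvPowerSeries.constantCoeff (σ := Fin 0) (R := A))
    ⟨fun f g h => by
      funext m
      have hm : m = 0 := Subsingleton.elim _ _
      rw [hm] at *
      exact h,
     fun a => ⟨MvPowerSeries.C (σ := Fin 0) (R := A) a, by simp⟩⟩

end HBaux2

noncomputable section
namespace HB3

open PowerSeries

variable {R : Type*} [CommRing R]

/-- Ideal of `k`-th coefficients of elements of `J` divisible by `X^k`. -/
def ldeal (J : Ideal R⟦X⟧) (k : ℕ) : Ideal R where
  carrier := {a | ∃ f ∈ J, X ^ k ∣ f ∧ coeff k f = a}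
  zero_mem' := ⟨0, J.zero_mem, dvd_zero _, map_zero _⟩
  add_mem' := by
    rintro a b ⟨f, hfJ, hfd, hfc⟩ ⟨g, hgJ, hgd, hgc⟩
    exact ⟨f + g, J.add_mem hfJ hgJ, dvd_add hfd hgd, by rw [map_add, hfc, hgc]⟩
  smul_mem' := by
    rintro r a ⟨f, hfJ, hfd, hfc⟩
    exact ⟨C r * f, J.mul_mem_left _ hfJ, hfd.mul_left _, by
      rw [coeff_C_mul, hfc]; rfl⟩

lemma ldeal_mono (J : Ideal R⟦X⟧) : Monotone (ldeal J) := by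
  have hstep : ∀ k, ldeal J k ≤ ldeal J (k + 1) := by
    rintro k a ⟨f, hfJ, hfd, hfc⟩
    refine ⟨X * f, J.mul_mem_left _ hfJ, ?_, by rw [coeff_succ_X_mul, hfc]⟩
    rw [pow_succ, mul_comm (X : R⟦X⟧) f]
    exact mul_dvd_mul hfd dvd_rfl
  exact monotone_nat_of_le_succ hstep

lemma step_lemma (J : Ideal R⟦X⟧) (d : ℕ)
    (hd : ∀ m, d ≤ m → ldeal J d = ldeal J m)
    (s : ℕ → Finset R) (w : ℕ → R → R⟦X⟧)
    (hw : ∀ k, ∀ a ∈ s k, w k a ∈ J ∧ X ^ k ∣ w k a ∧ coeff k (w k a) = a)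
    (hspan : ∀ k, ldeal J k ≤ Ideal.span ((s k : Set R)))
    (m : ℕ) (g : R⟦X⟧) (hg : g ∈ J) (hdvd : X ^ m ∣ g) :
    ∃ c : R → R,
      (g - ∑ a ∈ s (min m d), C (c a) * X ^ (m - min m d) * w (min m d) a) ∈ J ∧
      X ^ (m + 1) ∣
        (g - ∑ a ∈ s (min m d), C (c a) * X ^ (m - min m d) * w (min m d) a) := by
  set k := min m d with hk
  have hkm : k ≤ m := min_le_left _ _
  have hcm : coeff m g ∈ ldeal J k := by
    rcases le_total m d with h | h
    · have hkm' : k = m := min_eq_left h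
      rw [hkm']
      exact ⟨g, hg, hdvd, rfl⟩
    · have hkd : k = d := min_eq_right h
      rw [hkd, hd m h]
      exact ⟨g, hg, hdvd, rfl⟩
  obtain ⟨c, -, hc⟩ := Submodule.mem_span_finset.mp (hspan k hcm)
  refine ⟨c, ?_, ?_⟩
  · exact Ideal.sub_mem _ hg (Ideal.sum_mem _ fun a ha => J.mul_mem_left _ (hw k a ha).1)
  · rw [X_pow_dvd_iff]
    intro j hj
    have hcoeff : ∀ a ∈ s k,
        coeff j (C (c a) * X ^ (m - k) * w k a)
          = c a * (if m - k ≤ j then coeff (j - (m - k)) (w k a) else 0) := by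
      intro a ha
      rw [mul_assoc, coeff_C_mul, coeff_X_pow_mul']
    rw [map_sub, map_sum]
    rcases Nat.lt_or_ge j m with hjm | hjm
    · have hg0 : coeff j g = 0 := X_pow_dvd_iff.mp hdvd j hjm
      have hterm : ∀ a ∈ s k, coeff j (C (c a) * X ^ (m - k) * w k a) = 0 := by
        intro a ha
        rw [hcoeff a ha]
        by_cases hle : m - k ≤ j
        · rw [if_pos hle]
          have hwk : coeff (j - (m - k)) (w k a) = 0 := by
            apply X_pow_dvd_iff.mp (hw k a ha).2.1
            omega
          rw [hwk, mul_zero]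
        · rw [if_neg hle, mul_zero]
      rw [hg0, Finset.sum_congr rfl hterm, Finset.sum_const_zero, sub_zero]
    · have hjm' : j = m := by omega
      subst hjm'
      have hterm : ∀ a ∈ s k, coeff j (C (c a) * X ^ (j - k) * w k a) = c a * a := by
        intro a ha
        rw [hcoeff a ha, if_pos (Nat.sub_le _ _)]
        have hjk : j - (j - k) = k := by omega
        rw [hjk, (hw k a ha).2.2]
      rw [Finset.sum_congr rfl hterm]
      have hsum : ∑ a ∈ s k, c a * a = coeff j g := by
        rw [← hc]
        exact Finset.sum_congr rfl fun a _ => rfl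
      rw [hsum, sub_self]

theorem isNoetherianRing_powerSeries (R : Type*) [CommRing R] [IsNoetherianRing R] :
    IsNoetherianRing R⟦X⟧ := by
  rw [isNoetherianRing_iff_ideal_fg]
  intro J
  classical
  obtain ⟨d, hd⟩ := monotone_stabilizes_iff_noetherian.mpr (inferInstance : IsNoetherian R R)
    ⟨fun k => ldeal J k, ldeal_mono J⟩
  have hgen : ∀ k : ℕ, ∃ (s : Finset R) (w : R → R⟦X⟧),
      (∀ a ∈ s, w a ∈ J ∧ X ^ k ∣ w a ∧ coeff k (w a) = a) ∧
      ldeal J k ≤ Ideal.span ((s : Set R)) := by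
    intro k
    obtain ⟨s, hs⟩ := IsNoetherian.noetherian (ldeal J k)
    refine ⟨s, fun a =>
      if h : ∃ f ∈ J, X ^ k ∣ f ∧ coeff k f = a then h.choose else 0, ?_, ?_⟩
    · intro a ha
      have hmem : a ∈ ldeal J k := by
        rw [← hs]; exact Submodule.subset_span ha
      obtain ⟨f, hfJ, hfd, hfc⟩ := hmem
      have h : ∃ f ∈ J, X ^ k ∣ f ∧ coeff k f = a := ⟨f, hfJ, hfd, hfc⟩
      simp only [dif_pos h]
      obtain ⟨h1, h2, h3⟩ := h.choose_spec
      exact ⟨h1, h2, h3⟩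
    · rw [← hs]
  choose s w hw hspan using hgen
  have hd' : ∀ m, d ≤ m → ldeal J d = ldeal J m := fun m hm => hd m hm
  have hstep := step_lemma J d hd' s w hw hspan
  set G : Finset R⟦X⟧ := (Finset.range (d + 1)).biUnion (fun k => (s k).image (w k)) with hG
  have hGJ : ∀ f ∈ G, f ∈ J := by
    intro f hf
    rw [hG, Finset.mem_biUnion] at hf
    obtain ⟨k, _, hf⟩ := hf
    rw [Finset.mem_image] at hf
    obtain ⟨a, ha, rfl⟩ := hf
    exact (hw k a ha).1
  have hwG : ∀ k, k < d + 1 → ∀ a ∈ s k, w k a ∈ G := by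
    intro k hk a ha
    rw [hG, Finset.mem_biUnion]
    exact ⟨k, Finset.mem_range.mpr hk, Finset.mem_image.mpr ⟨a, ha, rfl⟩⟩
  refine ⟨G, le_antisymm ?_ ?_⟩
  · rw [Ideal.span_le]
    intro f hf
    exact hGJ f hf
  · intro g hg
    let T : ℕ → Type _ := fun m => {f : R⟦X⟧ // f ∈ J ∧ X ^ m ∣ f}
    let next : ∀ m, T m → T (m + 1) := fun m p =>
      ⟨p.1 - ∑ a ∈ s (min m d),
          C ((hstep m p.1 p.2.1 p.2.2).choose a) * X ^ (m - min m d) * w (min m d) a,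
        (hstep m p.1 p.2.1 p.2.2).choose_spec.1,
        (hstep m p.1 p.2.1 p.2.2).choose_spec.2⟩
    let gs : ∀ m, T m := fun m => Nat.rec (motive := T) ⟨g, hg, by simpa using one_dvd g⟩ next m
    let cc : ℕ → R → R := fun m => (hstep m (gs m).1 (gs m).2.1 (gs m).2.2).choose
    have hrec : ∀ m, (gs (m + 1)).1 = (gs m).1 -
        ∑ a ∈ s (min m d), C (cc m a) * X ^ (m - min m d) * w (min m d) a :=
      fun m => rfl
    have htel : ∀ j : ℕ, g = (gs (j + 1)).1 +
        ∑ m ∈ Finset.range (j + 1), ∑ a ∈ s (min m d),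
          C (cc m a) * X ^ (m - min m d) * w (min m d) a := by
      intro j
      induction j with
      | zero =>
        rw [Finset.sum_range_one, hrec 0]
        have : (gs 0).1 = g := rfl
        rw [this]
        ring
      | succ j ih =>
        rw [Finset.sum_range_succ, hrec (j + 1), ih]
        ring
    let h : ℕ → R → R⟦X⟧ := fun k a =>
      if k < d then C (cc k a) else PowerSeries.mk (fun i => cc (i + d) a)
    have hiden : g = ∑ k ∈ Finset.range (d + 1), ∑ a ∈ s k, h k a * w k a := by
      ext j
      have h1 : coeff j g =
          ∑ m ∈ Finset.range (j + 1), coeff j (∑ a ∈ s (min m d),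
            C (cc m a) * X ^ (m - min m d) * w (min m d) a) := by
        conv_lhs => rw [htel j]
        rw [map_add]
        have h0 : coeff j (gs (j + 1)).1 = 0 :=
          X_pow_dvd_iff.mp (gs (j + 1)).2.2 j (Nat.lt_succ_self j)
        rw [h0, zero_add, map_sum]
      rw [h1, map_sum]
      rw [← Finset.sum_fiberwise_of_maps_to (g := fun m => min m d)
        (t := Finset.range (d + 1))
        (fun m _ => Finset.mem_range.mpr (Nat.lt_succ_of_le (min_le_right m d)))
        (fun m => coeff j (∑ a ∈ s (min m d),
          C (cc m a) * X ^ (m - min m d) * w (min m d) a))]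
      refine Finset.sum_congr rfl fun k hk => ?_
      rw [Finset.mem_range] at hk
      -- per fiber k
      have hfil : ∀ m ∈ (Finset.range (j + 1)).filter (fun m => min m d = k), min m d = k :=
        fun m hm => (Finset.mem_filter.mp hm).2
      have e1 : ∑ m ∈ (Finset.range (j + 1)).filter (fun m => min m d = k),
          coeff j (∑ a ∈ s (min m d), C (cc m a) * X ^ (m - min m d) * w (min m d) a)
          = ∑ a ∈ s k, ∑ m ∈ (Finset.range (j + 1)).filter (fun m => min m d = k),
              coeff j (C (cc m a) * X ^ (m - k) * w k a) := by
        rw [Finset.sum_comm]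
        refine Finset.sum_congr rfl fun m hm => ?_
        rw [hfil m hm, map_sum]
      rw [e1, map_sum]
      -- now per a in s k
      refine Finset.sum_congr rfl fun a ha => ?_
      set P : R⟦X⟧ := ∑ m ∈ (Finset.range (j + 1)).filter (fun m => min m d = k),
        C (cc m a) * X ^ (m - k) with hP
      have e2 : ∑ m ∈ (Finset.range (j + 1)).filter (fun m => min m d = k),
          coeff j (C (cc m a) * X ^ (m - k) * w k a) = coeff j (P * w k a) := by
        rw [hP, Finset.sum_mul, map_sum]
      rw [e2]
      -- show the difference is divisible by X^(j+1)
      have hdvd : (X : R⟦X⟧) ^ (j + 1) ∣ (h k a - P) * w k a := by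
        rcases Nat.lt_or_ge j k with hjk | hjk
        · -- k > j : filter is empty, P = 0, and X^k ∣ w k a with j+1 ≤ k
          have hPz : P = 0 := by
            rw [hP]
            apply Finset.sum_eq_zero
            intro m hm
            rw [Finset.mem_filter, Finset.mem_range] at hm
            omega
          rw [hPz, sub_zero]
          exact Dvd.dvd.mul_left
            ((pow_dvd_pow (X : R⟦X⟧) (by omega : j + 1 ≤ k)).trans (hw k a ha).2.1) _
        · -- k ≤ j
          rcases Nat.lt_or_ge k d with hkd | hkd
          · -- k < d : P = C (cc k a) = h k a
            have hfil2 : (Finset.range (j + 1)).filter (fun m => min m d = k) = {k} := by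
              ext m
              simp only [Finset.mem_filter, Finset.mem_range, Finset.mem_singleton]
              omega
            have hPv : P = C (cc k a) := by
              rw [hP, hfil2, Finset.sum_singleton, Nat.sub_self, pow_zero, mul_one]
            have hh : h k a = C (cc k a) := if_pos hkd
            rw [hPv, hh, sub_self, zero_mul]
            exact dvd_zero _
          · -- k = d
            have hkd' : k = d := by omega
            subst hkd'
            have hh : h k a = PowerSeries.mk (fun i => cc (i + k) a) := if_neg (by omega)
            have hdiff : (X : R⟦X⟧) ^ (j + 1 - k) ∣ (h k a - P) := by
              rw [X_pow_dvd_iff]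
              intro i hi
              rw [map_sub, hh, coeff_mk, hP, map_sum]
              have hterm : ∀ m ∈ (Finset.range (j + 1)).filter (fun m => min m k = k),
                  coeff i (C (cc m a) * X ^ (m - k))
                    = cc m a * (if i = m - k then 1 else 0) := by
                intro m hm
                rw [coeff_C_mul, coeff_X_pow]
              rw [Finset.sum_congr rfl hterm]
              rw [Finset.sum_eq_single (i + k)]
              · rw [if_pos (by omega), mul_one, sub_self]
              · intro m hm hne
                rw [Finset.mem_filter, Finset.mem_range] at hm
                rw [if_neg (by omega), mul_zero]
              · intro hnot
                exfalso
                apply hnot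
                rw [Finset.mem_filter, Finset.mem_range]
                constructor
                · omega
                · omega
            have hmul : (X : R⟦X⟧) ^ (j + 1 - k) * (X : R⟦X⟧) ^ k ∣ (h k a - P) * w k a :=
              mul_dvd_mul hdiff (hw k a ha).2.1
            rwa [← pow_add, (by omega : j + 1 - k + k = j + 1)] at hmul
      have := X_pow_dvd_iff.mp hdvd j (Nat.lt_succ_self j)
      rw [sub_mul, map_sub, sub_eq_zero] at this
      exact this.symm
    rw [hiden]
    apply Ideal.sum_mem
    intro k hk
    apply Ideal.sum_mem
    intro a ha
    exact Ideal.mul_mem_left _ _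
      (Ideal.subset_span (hwG k (Finset.mem_range.mp hk) a ha))

end HB3

open TensorProduct

noncomputable section
namespace HB5

theorem finite_tensor (A R M N : Type*) [CommRing A] [CommRing R] [Algebra A R]
    [AddCommGroup M] [AddCommGroup N] [Module A M] [Module A N] [Module R M]
    [IsScalarTower A R M] [SMulCommClass A R M] [Module.Finite R M] [Module.Finite A N] :
    Module.Finite R (M ⊗[A] N) := by
  classical
  obtain ⟨sM, hsM⟩ := Module.Finite.fg_top (R := R) (M := M)
  obtain ⟨sN, hsN⟩ := Module.Finite.fg_top (R := A) (M := N)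
  refine ⟨⟨(sM ×ˢ sN).image (fun p => p.1 ⊗ₜ[A] p.2), ?_⟩⟩
  rw [eq_top_iff]
  rintro x -
  induction x with
  | zero => exact Submodule.zero_mem _
  | add x y hx hy => exact Submodule.add_mem _ hx hy
  | tmul m n =>
    have hm : m ∈ Submodule.span R (sM : Set M) := hsM ▸ Submodule.mem_top
    obtain ⟨cm, -, hcm⟩ := Submodule.mem_span_finset.mp hm
    have hn : n ∈ Submodule.span A (sN : Set N) := hsN ▸ Submodule.mem_top
    obtain ⟨cn, -, hcn⟩ := Submodule.mem_span_finset.mp hn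
    rw [← hcm, ← hcn, TensorProduct.sum_tmul]
    apply Submodule.sum_mem
    intro i hi
    rw [← TensorProduct.smul_tmul', TensorProduct.tmul_sum]
    apply Submodule.smul_mem
    apply Submodule.sum_mem
    intro j hj
    have h1 : i ⊗ₜ[A] (cn j • j) = (algebraMap A R (cn j)) • (i ⊗ₜ[A] j) := by
      rw [← TensorProduct.smul_tmul, ← TensorProduct.smul_tmul', algebraMap_smul]
    rw [h1]
    apply Submodule.smul_mem
    apply Submodule.subset_span
    exact Finset.mem_coe.mpr (Finset.mem_image.mpr ⟨(i, j), Finset.mem_product.mpr ⟨hi, hj⟩, rfl⟩)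

end HB5

namespace HB6

theorem isNoetherianRing_mvPowerSeries (A : Type*) [CommRing A] [IsNoetherianRing A] :
    ∀ n : ℕ, IsNoetherianRing (MvPowerSeries (Fin n) A)
  | 0 => isNoetherianRing_of_ringEquiv A (HBaux2.emptyRingEquiv A).symm
  | (n + 1) => by
    haveI := isNoetherianRing_mvPowerSeries A n
    haveI : IsNoetherianRing (PowerSeries (MvPowerSeries (Fin n) A)) :=
      HB3.isNoetherianRing_powerSeries _
    have e : Fin (n + 1) ≃ Unit ⊕ Fin n :=
      (finSuccEquiv n).trans ((Equiv.optionEquivSumPUnit (Fin n)).trans (Equiv.sumComm _ _))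
    exact isNoetherianRing_of_ringEquiv (MvPowerSeries Unit (MvPowerSeries (Fin n) A))
      ((HBaux2.renameRingEquiv e A).trans (HBaux.sumRingEquiv Unit (Fin n) A)).symm

end HB6

open TensorProduct


/-- Let `A` be a Noetherian ring, `R = A[[x₁,...,xₙ]]`, `M` a finite
`R`-module and `N` a finite `A`-module.  Then the canonical map
`M ⊗_A N → (M ⊗_A N)^∧` (the `⟨x⟩`-adic completion) is injective. -/
theorem tensor_to_adicCompletion_injective
    (A : Type) [CommRing A] [IsNoetherianRing A] (n : ℕ)
    (M N : Type) [AddCommGroup M] [AddCommGroup N] [Module A M] [Module A N]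
    [Module (MvPowerSeries (Fin n) A) M]
    [IsScalarTower A (MvPowerSeries (Fin n) A) M]
    [SMulCommClass A (MvPowerSeries (Fin n) A) M]
    [Module.Finite (MvPowerSeries (Fin n) A) M] [Module.Finite A N] :
    Function.Injective
      (AdicCompletion.of
        (Ideal.span (Set.range (MvPowerSeries.X : Fin n → MvPowerSeries (Fin n) A)))
        (M ⊗[A] N)) := by
  classical
  set R := MvPowerSeries (Fin n) A with hR
  haveI : IsNoetherianRing R := HB6.isNoetherianRing_mvPowerSeries A n
  haveI : Module.Finite R (M ⊗[A] N) := HB5.finite_tensor A R M N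
  set I : Ideal R := Ideal.span (Set.range MvPowerSeries.X) with hI
  intro x y hxy
  have hz : AdicCompletion.of I (M ⊗[A] N) (x - y) = 0 := by
    rw [map_sub, hxy, sub_self]
  have hmem : ∀ k : ℕ, x - y ∈ (I ^ k • ⊤ : Submodule R (M ⊗[A] N)) := by
    intro k
    have h1 : (AdicCompletion.of I (M ⊗[A] N) (x - y)).1 k = 0 := by rw [hz]; rfl
    rw [AdicCompletion.of_apply, Submodule.mkQ_apply] at h1
    exact (Submodule.Quotient.mk_eq_zero _).mp h1
  have hfin : x - y ∈ (⨅ k : ℕ, (I ^ k • ⊤ : Submodule R (M ⊗[A] N))) :=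
    (Submodule.mem_iInf _).mpr hmem
  obtain ⟨r, hr⟩ := (Ideal.mem_iInf_smul_pow_eq_bot_iff I (x - y)).mp hfin
  have hconst : MvPowerSeries.constantCoeff (σ := Fin n) (R := A) (r : R) = 0 := by
    have hle : I ≤ RingHom.ker (MvPowerSeries.constantCoeff (σ := Fin n) (R := A)) := by
      rw [hI, Ideal.span_le]
      rintro _ ⟨i, rfl⟩
      rw [SetLike.mem_coe, RingHom.mem_ker]
      exact MvPowerSeries.constantCoeff_X i
    exact RingHom.mem_ker.mp (hle r.2)
  have hunit : IsUnit (1 - (r : R)) := by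
    rw [MvPowerSeries.isUnit_iff_constantCoeff, map_sub, map_one, hconst, sub_zero]
    exact isUnit_one
  have hzero : x - y = 0 := by
    apply hunit.smul_left_cancel.mp
    simp [sub_smul, hr]
  exact sub_eq_zero.mp hzero
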